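/- Let G be a transitive multigraph with adjacency matrix M and let λ1 be the smallest eigenvalue of M. Then the optimal value of the dual semidefinite program SD*(G) equals (1/2) * Σ_{i<j} M(i,j) - |V| * λ1 / 4. -/

import Mathlib

open scoped Matrix


/-- Let `G` be a transitive multigraph with adjacency matrix `M` (symmetric, nonnegative,
zero diagonal) and let `λ₁` be the smallest eigenvalue of `M`.  Then the optimal value of
the dual semidefinite program `SD*(G) = min {(1/2)Σ_{i<j} M(i,j) + (1/4)Σᵢ γᵢ :
M + diag(γ) ⪰ 0}` equals `(1/2)Σ_{i<j} M(i,j) - |V|λ₁/4`. -/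
theorem dual_sdp_transitive (n : ℕ) (M : Matrix (Fin n) (Fin n) ℝ)
    (hsymm : M.IsSymm) (hnn : ∀ i j, 0 ≤ M i j) (hdiag : ∀ i, M i i = 0)
    (htrans : ∀ i j : Fin n, ∃ σ : Equiv.Perm (Fin n),
      (∀ x y, M (σ x) (σ y) = M x y) ∧ σ i = j)
    (lam1 : ℝ) (heig : Module.End.HasEigenvalue (Matrix.toLin' M) lam1)
    (hmin : ∀ μ : ℝ, Module.End.HasEigenvalue (Matrix.toLin' M) μ → lam1 ≤ μ) :
    IsLeast
      {v : ℝ | ∃ γ : Fin n → ℝ, (M + Matrix.diagonal γ).PosSemidef ∧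
        v = (1 / 2) * ∑ i, ∑ j ∈ Finset.Ioi i, M i j + (1 / 4) * ∑ i, γ i}
      ((1 / 2) * ∑ i, ∑ j ∈ Finset.Ioi i, M i j - (n : ℝ) * lam1 / 4) := by
  classical
  have hM : M.IsHermitian := by
    ext i j
    simpa using (congrFun (congrFun hsymm j) i).symm
  -- every eigenvalue of hM is ≥ lam1
  have hev : ∀ i : Fin n, lam1 ≤ hM.eigenvalues i := by
    intro i
    apply hmin
    apply Module.End.hasEigenvalue_of_hasEigenvector
      (x := ⇑(hM.eigenvectorBasis i))
    constructor
    · rw [Module.End.mem_eigenspace_iff, Matrix.toLin'_apply]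
      exact hM.mulVec_eigenvectorBasis i
    · intro h
      apply hM.eigenvectorBasis.orthonormal.ne_zero i
      ext a
      exact congrFun h a
  constructor
  · -- membership: γ = const (-lam1)
    refine ⟨fun _ => -lam1, ?_, ?_⟩
    · have hU : (hM.eigenvectorUnitary : Matrix (Fin n) (Fin n) ℝ) *
          star (hM.eigenvectorUnitary : Matrix (Fin n) (Fin n) ℝ) = 1 :=
        Matrix.mem_unitaryGroup_iff.mp hM.eigenvectorUnitary.2
      have key : M + Matrix.diagonal (fun _ : Fin n => -lam1)
          = (hM.eigenvectorUnitary : Matrix (Fin n) (Fin n) ℝ) *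
            Matrix.diagonal (fun i => hM.eigenvalues i - lam1) *
            star (hM.eigenvectorUnitary : Matrix (Fin n) (Fin n) ℝ) := by
        have h2 : (hM.eigenvectorUnitary : Matrix (Fin n) (Fin n) ℝ) * ((-lam1) • 1) *
            star (hM.eigenvectorUnitary : Matrix (Fin n) (Fin n) ℝ)
            = Matrix.diagonal (fun _ : Fin n => -lam1) := by
          rw [Matrix.mul_smul, mul_one, Matrix.smul_mul, hU, Matrix.smul_one_eq_diagonal]
        have hdiag' : Matrix.diagonal (fun i => hM.eigenvalues i - lam1)
            = Matrix.diagonal ((RCLike.ofReal (K := ℝ)) ∘ hM.eigenvalues) + (-lam1) • 1 := by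
          ext i j
          by_cases h : i = j <;>
            simp [h, Matrix.one_apply, Matrix.diagonal_apply, sub_eq_add_neg]
        rw [hdiag', Matrix.mul_add, Matrix.add_mul, h2]
        conv_lhs => rw [hM.spectral_theorem, Unitary.conjStarAlgAut_apply]
      rw [key, Matrix.star_eq_conjTranspose]
      exact (Matrix.posSemidef_diagonal_iff.mpr fun i => by linarith [hev i]).mul_mul_conjTranspose_same _
    · simp only [Finset.sum_const, Finset.card_univ, Fintype.card_fin, nsmul_eq_mul]
      ring
  · -- lower bound
    rintro x ⟨γ, hγ, rfl⟩
    obtain ⟨v, hv⟩ := heig.exists_hasEigenvector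
    have hMv : M *ᵥ v = lam1 • v := by
      rw [← Matrix.toLin'_apply]; exact hv.apply_eq_smul
    set N : ℝ := ∑ i, v i ^ 2 with hNdef
    have hN : 0 < N := by
      obtain ⟨i, hi⟩ := Function.ne_iff.mp hv.2
      exact Finset.sum_pos' (fun j _ => sq_nonneg _)
        ⟨i, Finset.mem_univ i, by simpa using pow_two_pos_of_ne_zero (by simpa using hi)⟩
    have hn : 0 < n := by
      rcases Nat.eq_zero_or_pos n with h | h
      · subst h; exact absurd (funext fun i => i.elim0 : v = 0) hv.2
      · exact h
    set i₀ : Fin n := ⟨0, hn⟩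
    set S : Finset (Equiv.Perm (Fin n)) :=
      Finset.univ.filter (fun σ => ∀ x y, M (σ x) (σ y) = M x y) with hSdef
    have hmemS : ∀ σ, σ ∈ S ↔ ∀ x y, M (σ x) (σ y) = M x y := fun σ => by
      simp [hSdef]
    have hmul : ∀ {σ τ}, σ ∈ S → τ ∈ S → σ * τ ∈ S := by
      intro σ τ hσ hτ
      refine (hmemS _).mpr fun x y => ?_
      rw [Equiv.Perm.mul_apply, Equiv.Perm.mul_apply, (hmemS _).mp hσ, (hmemS _).mp hτ]
    have hinv : ∀ {σ}, σ ∈ S → σ⁻¹ ∈ S := by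
      intro σ hσ
      refine (hmemS _).mpr fun x y => ?_
      have := (hmemS _).mp hσ (σ⁻¹ x) (σ⁻¹ y)
      rwa [Equiv.Perm.coe_inv, Equiv.apply_symm_apply, Equiv.apply_symm_apply, eq_comm] at this
    -- all fibers have the same cardinality
    have hcard : ∀ a j a' j' : Fin n,
        (S.filter fun σ => σ a = j).card = (S.filter fun σ => σ a' = j').card := by
      intro a j a' j'
      obtain ⟨α, hα, hαa⟩ := htrans a' a
      obtain ⟨β, hβ, hβj⟩ := htrans j j'
      have hαS : α ∈ S := (hmemS _).mpr hα
      have hβS : β ∈ S := (hmemS _).mpr hβ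
      refine Finset.card_bij' (fun σ _ => β * σ * α) (fun ρ _ => β⁻¹ * ρ * α⁻¹) ?_ ?_ ?_ ?_
      · intro σ hσ
        obtain ⟨h1, h2⟩ := Finset.mem_filter.mp hσ
        refine Finset.mem_filter.mpr ⟨hmul (hmul hβS h1) hαS, ?_⟩
        simp [Equiv.Perm.mul_apply, hαa, h2, hβj]
      · intro ρ hρ
        obtain ⟨h1, h2⟩ := Finset.mem_filter.mp hρ
        refine Finset.mem_filter.mpr ⟨hmul (hmul (hinv hβS) h1) (hinv hαS), ?_⟩
        have : α⁻¹ a = a' := by rw [← hαa, Equiv.Perm.coe_inv, Equiv.symm_apply_apply]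
        have hβ' : β⁻¹ j' = j := by rw [← hβj, Equiv.Perm.coe_inv, Equiv.symm_apply_apply]
        simp [Equiv.Perm.mul_apply, this, h2, hβ']
      · intro σ _; group
      · intro ρ _; group
    set c : ℕ := (S.filter fun σ => σ i₀ = i₀).card with hcdef
    have hc1 : 1 ≤ c := by
      refine Finset.card_pos.mpr ⟨1, Finset.mem_filter.mpr ⟨(hmemS 1).mpr ?_, rfl⟩⟩
      intro x y; rfl
    have hScard : S.card = n * c := by
      rw [Finset.card_eq_sum_card_fiberwise (f := fun σ => σ i₀) (t := Finset.univ)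
        (fun σ _ => Finset.mem_univ _)]
      rw [Finset.sum_congr rfl fun j _ => hcard i₀ j i₀ i₀]
      simp [Finset.sum_const, Finset.card_univ, mul_comm, hcdef]
    have hfiber : ∀ a : Fin n, (∑ σ ∈ S, γ (σ a)) = c * ∑ j, γ j := by
      intro a
      rw [← Finset.sum_fiberwise' S (fun σ => σ a) γ, Finset.mul_sum]
      refine Finset.sum_congr rfl fun j _ => ?_
      rw [Finset.sum_const, hcard a j i₀ i₀, ← hcdef, nsmul_eq_mul]
    -- per-automorphism inequality
    have hq : ∀ σ ∈ S, 0 ≤ lam1 * N + ∑ a, γ (σ a) * v a ^ 2 := by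
      intro σ hσ
      have h0 := hγ.dotProduct_mulVec_nonneg (fun i => v (σ.symm i))
      rw [star_trivial] at h0
      have e1 : (fun i => v (σ.symm i)) ⬝ᵥ ((M + Matrix.diagonal γ) *ᵥ fun i => v (σ.symm i))
          = lam1 * N + ∑ a, γ (σ a) * v a ^ 2 := by
        rw [Matrix.add_mulVec, dotProduct_add]
        congr 1
        · have : (fun i => v (σ.symm i)) ⬝ᵥ (M *ᵥ fun i => v (σ.symm i)) = v ⬝ᵥ (M *ᵥ v) := by
            simp only [dotProduct, Matrix.mulVec, dotProduct]
            rw [← Equiv.sum_comp σ (fun i => v (σ.symm i) * ∑ j, M i j * v (σ.symm j))]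
            refine Finset.sum_congr rfl fun a _ => ?_
            rw [Equiv.symm_apply_apply]
            congr 1
            rw [← Equiv.sum_comp σ (fun j => M (σ a) j * v (σ.symm j))]
            refine Finset.sum_congr rfl fun b _ => ?_
            rw [Equiv.symm_apply_apply, (hmemS σ).mp hσ]
          rw [this, hMv]
          simp only [dotProduct, Pi.smul_apply, smul_eq_mul, hNdef, Finset.mul_sum]
          exact Finset.sum_congr rfl fun i _ => by ring
        · simp only [dotProduct, Matrix.mulVec_diagonal]
          rw [← Equiv.sum_comp σ (fun i => v (σ.symm i) * (γ i * v (σ.symm i)))]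
          refine Finset.sum_congr rfl fun a _ => ?_
          rw [Equiv.symm_apply_apply]; ring
      rw [e1] at h0
      exact h0
    -- sum over S
    have hsumS : 0 ≤ (S.card : ℝ) * (lam1 * N) + (c * ∑ j, γ j) * N := by
      have h0 : 0 ≤ ∑ σ ∈ S, (lam1 * N + ∑ a, γ (σ a) * v a ^ 2) :=
        Finset.sum_nonneg hq
      rw [Finset.sum_add_distrib, Finset.sum_const, nsmul_eq_mul] at h0
      rw [Finset.sum_comm] at h0
      have : ∑ a : Fin n, ∑ σ ∈ S, γ (σ a) * v a ^ 2 = (c * ∑ j, γ j) * N := by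
        rw [hNdef, Finset.mul_sum]
        refine Finset.sum_congr rfl fun a _ => ?_
        rw [← Finset.sum_mul, hfiber a]
      rwa [this] at h0
    have hsum : -(n : ℝ) * lam1 ≤ ∑ i, γ i := by
      rw [hScard] at hsumS
      push_cast at hsumS
      have hc1' : (1 : ℝ) ≤ (c : ℝ) := by exact_mod_cast hc1
      have hcN : (0 : ℝ) < (c : ℝ) * N := by nlinarith
      rw [show (n : ℝ) * ↑c * (lam1 * N) + (↑c * ∑ j, γ j) * N
          = (c : ℝ) * N * ((n : ℝ) * lam1 + ∑ j, γ j) from by ring] at hsumS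
      have h2 : (0 : ℝ) ≤ (n : ℝ) * lam1 + ∑ j, γ j := by
        have := (mul_le_mul_iff_right₀ hcN).mp
          (by linarith : (c : ℝ) * N * 0 ≤ (c : ℝ) * N * ((n : ℝ) * lam1 + ∑ j, γ j))
        linarith
      linarith
    linarith
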